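/- In the setting of the preceding model (k i.i.d. pairs of b-bit hash values with per-pair collision probability P_b, one-hot encoded and count-sketched with B bins and Rademacher weights), define the estimator P̂_b = ⟨z,w⟩/k. Then E[P̂_b] = P_b and Var(P̂_b) = P_b(1−P_b)/k + (1/B)·[1 + P_b² − P_b²/k − P_b/k]. -/

import Mathlib

open MeasureTheory ProbabilityTheory
open scoped ENNReal

section GcwsAux
variable {Ω : Type*} [MeasurableSpace Ω] {P : Measure Ω} [IsProbabilityMeasure P]

private lemma gcws_int_of_bound {f : Ω → ℝ} (hm : AEStronglyMeasurable f P) {C : ℝ}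
    (hb : ∀ᵐ ω ∂P, |f ω| ≤ C) : Integrable f P :=
  (integrable_const C).mono' hm (by
    filter_upwards [hb] with ω hw
    rwa [Real.norm_eq_abs])

private lemma gcws_rad_ae {ρ : Ω → ℝ} (hm : Measurable ρ)
    (h1 : P {ω | ρ ω = 1} = 1/2) (h2 : P {ω | ρ ω = -1} = 1/2) :
    ∀ᵐ ω ∂P, ρ ω = 1 ∨ ρ ω = -1 := by
  have hA : MeasurableSet {ω | ρ ω = 1} := hm (measurableSet_singleton 1)
  have hB : MeasurableSet {ω | ρ ω = -1} := hm (measurableSet_singleton (-1))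
  have hdis : Disjoint {ω | ρ ω = 1} {ω | ρ ω = -1} := by
    rw [Set.disjoint_left]; rintro ω hω1 hω2
    simp only [Set.mem_setOf_eq] at hω1 hω2; rw [hω1] at hω2; norm_num at hω2
  have hu : P ({ω | ρ ω = 1} ∪ {ω | ρ ω = -1}) = 1 := by
    rw [measure_union hdis hB, h1, h2, ENNReal.add_halves]
  have hc : P ({ω | ρ ω = 1} ∪ {ω | ρ ω = -1})ᶜ = 0 := by
    rw [prob_compl_eq_zero_iff (hA.union hB)]; exact hu
  rw [ae_iff]
  convert hc using 2
  try ext ω; simp [Set.mem_setOf_eq, not_or]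

private lemma gcws_rad_integral {ρ : Ω → ℝ} (hm : Measurable ρ)
    (h1 : P {ω | ρ ω = 1} = 1/2) (hae : ∀ᵐ ω ∂P, ρ ω = 1 ∨ ρ ω = -1) :
    ∫ ω, ρ ω ∂P = 0 := by
  have hA : MeasurableSet {ω | ρ ω = 1} := hm (measurableSet_singleton 1)
  have hcong : ρ =ᵐ[P] fun ω => 2 * Set.indicator {ω | ρ ω = 1} (fun _ => (1:ℝ)) ω - 1 := by
    filter_upwards [hae] with ω hω
    rcases hω with hω | hω
    · rw [Set.indicator_of_mem (by simpa [Set.mem_setOf_eq] using hω)]; rw [hω]; norm_num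
    · rw [Set.indicator_of_notMem (by simp [Set.mem_setOf_eq, hω]; norm_num)]
      simp [hω]
  rw [integral_congr_ae hcong, integral_sub ((((integrable_indicator_iff hA).2
    (integrable_const (1:ℝ)).integrableOn)).const_mul 2) (integrable_const 1),
    integral_const_mul, integral_indicator_const (1:ℝ) hA, measureReal_def, h1]
  norm_num [ENNReal.toReal_div]

variable {ι : Type*} [DecidableEq ι] {r : ι → Ω → ℝ}

private lemma gcws_prod_integrable (hrm : ∀ i, Measurable (r i))
    (hpm : ∀ i, ∀ᵐ ω ∂P, r i ω = 1 ∨ r i ω = -1) (s : Finset ι) :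
    Integrable (fun ω => ∏ i ∈ s, r i ω) P := by
  apply gcws_int_of_bound (Measurable.aestronglyMeasurable (by
    exact Finset.measurable_prod s fun i _ => hrm i)) (C := 1)
  have hall : ∀ᵐ ω ∂P, ∀ i ∈ s, r i ω = 1 ∨ r i ω = -1 :=
    (ae_ball_iff s.countable_toSet).2 fun i _ => hpm i
  filter_upwards [hall] with ω hω
  rw [Finset.abs_prod]
  apply Finset.prod_le_one (fun i _ => abs_nonneg _)
  intro i hi
  rcases hω i hi with hh | hh <;> rw [hh] <;> norm_num

private lemma gcws_prod_integral_zero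
    (hriid : iIndepFun r P)
    (hrm : ∀ i, Measurable (r i))
    (hpm : ∀ i, ∀ᵐ ω ∂P, r i ω = 1 ∨ r i ω = -1)
    (hzero : ∀ i, ∫ ω, r i ω ∂P = 0)
    (s : Finset ι) (hs : s.Nonempty) :
    ∫ ω, ∏ i ∈ s, r i ω ∂P = 0 := by
  obtain ⟨i, hi⟩ := hs
  have hind : IndepFun (∏ j ∈ s.erase i, r j) (r i) P :=
    hriid.indepFun_finset_prod_of_notMem hrm (Finset.notMem_erase i s)
  have hInt : Integrable (∏ j ∈ s.erase i, r j) P := by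
    have : (∏ j ∈ s.erase i, r j) = fun ω => ∏ j ∈ s.erase i, r j ω := by
      funext ω; simp [Finset.prod_apply]
    rw [this]; exact gcws_prod_integrable hrm hpm _
  have hIntr : Integrable (r i) P := by
    apply gcws_int_of_bound (hrm i).aestronglyMeasurable (C := 1)
    filter_upwards [hpm i] with ω hω
    rcases hω with hh | hh <;> rw [hh] <;> norm_num
  have hmul := hind.integral_mul_eq_mul_integral hInt.aestronglyMeasurable hIntr.aestronglyMeasurable
  have hrw : (fun ω => ∏ j ∈ s, r j ω) = (∏ j ∈ s.erase i, r j) * r i := by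
    funext ω
    simp only [Pi.mul_apply, Finset.prod_apply]
    exact (Finset.mul_prod_erase s (fun j => r j ω) hi).symm.trans (mul_comm _ _)
  rw [hrw]
  rw [hmul, hzero i, mul_zero]

private lemma gcws_pair_integral_zero
    (hriid : iIndepFun r P)
    (hrm : ∀ i, Measurable (r i))
    (hpm : ∀ i, ∀ᵐ ω ∂P, r i ω = 1 ∨ r i ω = -1)
    (hzero : ∀ i, ∫ ω, r i ω ∂P = 0)
    {i j : ι} (hij : i ≠ j) :
    ∫ ω, r i ω * r j ω ∂P = 0 := by
  have := gcws_prod_integral_zero hriid hrm hpm hzero {i, j} ⟨i, by simp⟩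
  rwa [show (fun ω => ∏ x ∈ ({i, j} : Finset ι), r x ω) = fun ω => r i ω * r j ω by
    funext ω; rw [Finset.prod_pair hij]] at this

private lemma gcws_quad_integral_zero
    (hriid : iIndepFun r P)
    (hrm : ∀ i, Measurable (r i))
    (hpm : ∀ i, ∀ᵐ ω ∂P, r i ω = 1 ∨ r i ω = -1)
    (hzero : ∀ i, ∫ ω, r i ω ∂P = 0)
    {i1 i2 i3 i4 : ι} (h12 : i1 ≠ i2) (h34 : i3 ≠ i4)
    (hA : ¬(i3 = i1 ∧ i4 = i2)) (hB : ¬(i3 = i2 ∧ i4 = i1)) :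
    ∫ ω, r i1 ω * r i2 ω * (r i3 ω * r i4 ω) ∂P = 0 := by
  by_cases c1 : i3 = i1
  · subst c1
    have h42 : i2 ≠ i4 := fun hh => hA ⟨rfl, hh.symm⟩
    have hcong : ∫ ω, r i3 ω * r i2 ω * (r i3 ω * r i4 ω) ∂P
        = ∫ ω, r i2 ω * r i4 ω ∂P := by
      apply integral_congr_ae
      filter_upwards [hpm i3] with ω hω
      rcases hω with hh | hh <;> rw [hh] <;> ring
    rw [hcong]; exact gcws_pair_integral_zero hriid hrm hpm hzero h42
  · by_cases c2 : i3 = i2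
    · subst c2
      have h41 : i1 ≠ i4 := fun hh => hB ⟨rfl, hh.symm⟩
      have hcong : ∫ ω, r i1 ω * r i3 ω * (r i3 ω * r i4 ω) ∂P
          = ∫ ω, r i1 ω * r i4 ω ∂P := by
        apply integral_congr_ae
        filter_upwards [hpm i3] with ω hω
        rcases hω with hh | hh <;> rw [hh] <;> ring
      rw [hcong]; exact gcws_pair_integral_zero hriid hrm hpm hzero h41
    · by_cases c3 : i4 = i1
      · subst c3
        have h23 : i2 ≠ i3 := fun hh => c2 hh.symm
        have hcong : ∫ ω, r i4 ω * r i2 ω * (r i3 ω * r i4 ω) ∂P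
            = ∫ ω, r i2 ω * r i3 ω ∂P := by
          apply integral_congr_ae
          filter_upwards [hpm i4] with ω hω
          rcases hω with hh | hh <;> rw [hh] <;> ring
        rw [hcong]; exact gcws_pair_integral_zero hriid hrm hpm hzero h23
      · by_cases c4 : i4 = i2
        · subst c4
          have h13 : i1 ≠ i3 := fun hh => c1 hh.symm
          have hcong : ∫ ω, r i1 ω * r i4 ω * (r i3 ω * r i4 ω) ∂P
              = ∫ ω, r i1 ω * r i3 ω ∂P := by
            apply integral_congr_ae
            filter_upwards [hpm i4] with ω hω
            rcases hω with hh | hh <;> rw [hh] <;> ring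
          rw [hcong]; exact gcws_pair_integral_zero hriid hrm hpm hzero h13
        · have hnm : i4 ∉ ({i1, i2, i3} : Finset ι) := by
            simp only [Finset.mem_insert, Finset.mem_singleton, not_or]
            exact ⟨fun hh => c3 hh, fun hh => c4 hh, fun hh => h34 hh.symm⟩
          have hind : IndepFun (∏ j ∈ ({i1, i2, i3} : Finset ι), r j) (r i4) P :=
            hriid.indepFun_finset_prod_of_notMem hrm hnm
          have hInt : Integrable (∏ j ∈ ({i1, i2, i3} : Finset ι), r j) P := by
            have : (∏ j ∈ ({i1, i2, i3} : Finset ι), r j)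
                = fun ω => ∏ j ∈ ({i1, i2, i3} : Finset ι), r j ω := by
              funext ω; simp [Finset.prod_apply]
            rw [this]; exact gcws_prod_integrable hrm hpm _
          have hIntr : Integrable (r i4) P := by
            apply gcws_int_of_bound (hrm i4).aestronglyMeasurable (C := 1)
            filter_upwards [hpm i4] with ω hω
            rcases hω with hh | hh <;> rw [hh] <;> norm_num
          have hmul := hind.integral_mul_eq_mul_integral hInt.aestronglyMeasurable hIntr.aestronglyMeasurable
          have h1nm : i1 ∉ ({i2, i3} : Finset ι) := by
            simp only [Finset.mem_insert, Finset.mem_singleton, not_or]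
            exact ⟨h12, fun hh => c1 hh.symm⟩
          have h2nm : i2 ∉ ({i3} : Finset ι) := by
            simp only [Finset.mem_singleton]
            exact fun hh => c2 hh.symm
          have hrw : (fun ω => r i1 ω * r i2 ω * (r i3 ω * r i4 ω))
              = (∏ j ∈ ({i1, i2, i3} : Finset ι), r j) * r i4 := by
            funext ω
            simp only [Pi.mul_apply, Finset.prod_apply]
            rw [Finset.prod_insert h1nm, Finset.prod_insert h2nm, Finset.prod_singleton]
            ring
          rw [hrw, hmul, hzero i4, mul_zero]

private lemma gcws_sum_ite {α : Type*} [Fintype α] [DecidableEq α] (u v : α) (x y : ℝ) :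
    (∑ w : α, (x * if u = w then (1:ℝ) else 0) * (y * if v = w then 1 else 0))
      = x * y * (if u = v then 1 else 0) := by
  have hterm : ∀ w, (x * if u = w then (1:ℝ) else 0) * (y * if v = w then 1 else 0)
      = if u = w then (if v = w then x * y else 0) else 0 := by
    intro w
    by_cases h1 : u = w <;> by_cases h2 : v = w <;> simp [h1, h2]
  rw [Finset.sum_congr rfl fun w _ => hterm w, Finset.sum_ite_eq]
  by_cases huv : u = v <;> simp [huv, eq_comm]

private lemma gcws_sum_ite2 {α : Type*} [Fintype α] [DecidableEq α] (u v : α) :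
    (∑ w : α, (if u = w then (1:ℝ) else 0) * (if v = w then 1 else 0))
      = (if u = v then 1 else 0) := by
  have := gcws_sum_ite u v 1 1
  simpa using this

private lemma gcws_sum_ite1 {α : Type*} [Fintype α] [DecidableEq α] (u : α) :
    (∑ w : α, if u = w then (1:ℝ) else 0) = 1 := by
  rw [Finset.sum_ite_eq]; simp

private lemma gcws_abs_ite_le (c : Prop) [Decidable c] : |(if c then (1:ℝ) else 0)| ≤ 1 := by
  by_cases hc : c <;> simp [hc]

private lemma gcws_abs_mul_le {x y : ℝ} (hx : |x| ≤ 1) (hy : |y| ≤ 1) : |x * y| ≤ 1 := by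
  rw [abs_mul]
  nlinarith [abs_nonneg x, abs_nonneg y]

end GcwsAux

noncomputable def oneHotSketch {Ω : Type*} {k n B : ℕ} (X : Fin k → Ω → Fin n)
    (h : Fin k × Fin n → Ω → Fin B) (r : Fin k × Fin n → Ω → ℝ) (j : Fin B) (ω : Ω) : ℝ :=
  ∑ i : Fin k × Fin n, (if X i.1 ω = i.2 then 1 else 0) * r i ω * (if h i ω = j then 1 else 0)

set_option maxHeartbeats 1000000 in
theorem gcws_countSketch_estimator_mean_variance {Ω : Type*} [MeasurableSpace Ω]
    (P : Measure Ω) [IsProbabilityMeasure P] (b k B : ℕ) (hb : 1 ≤ b) (hk : 1 ≤ k)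
    (hB : 1 ≤ B) (Pb : ℝ) (hPb0 : 0 ≤ Pb) (hPb1 : Pb ≤ 1)
    (X Y : Fin k → Ω → Fin (2 ^ b))
    (hXm : ∀ j, Measurable (X j)) (hYm : ∀ j, Measurable (Y j))
    (hpairs_indep : iIndepFun (fun j ω => (X j ω, Y j ω)) P)
    (hpairs_ident : ∀ j j', IdentDistrib (fun ω => (X j ω, Y j ω))
      (fun ω => (X j' ω, Y j' ω)) P P)
    (hcollision : ∀ j, P {ω | X j ω = Y j ω} = ENNReal.ofReal Pb)
    (h : Fin k × Fin (2 ^ b) → Ω → Fin B) (r : Fin k × Fin (2 ^ b) → Ω → ℝ)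
    (hhm : ∀ i, Measurable (h i)) (hrm : ∀ i, Measurable (r i))
    (hunif : ∀ i, ∀ j : Fin B, P {ω | h i ω = j} = (B : ℝ≥0∞)⁻¹)
    (hhiid : iIndepFun h P)
    (hriid : iIndepFun r P)
    (hrad : ∀ i, P {ω | r i ω = 1} = 1 / 2 ∧ P {ω | r i ω = -1} = 1 / 2)
    (hhr : IndepFun (fun ω i => h i ω) (fun ω i => r i ω) P)
    (hsk_XY : IndepFun (fun ω => (fun i => h i ω, fun i => r i ω))
      (fun ω => fun j => (X j ω, Y j ω)) P) :
    ∫ ω, (∑ j, oneHotSketch X h r j ω * oneHotSketch Y h r j ω) / k ∂P = Pb ∧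
      variance (fun ω => (∑ j, oneHotSketch X h r j ω * oneHotSketch Y h r j ω) / k) P
        = Pb * (1 - Pb) / k
          + (1 / B) * (1 + Pb ^ 2 - Pb ^ 2 / k - Pb / k) := by
  classical
  -- ## notation
  set T : (Fin k × Fin (2 ^ b)) × (Fin k × Fin (2 ^ b)) → Ω → ℝ := fun p ω =>
    (if h p.1 ω = h p.2 ω then (1:ℝ) else 0) * (r p.1 ω * r p.2 ω)
      * ((if X p.1.1 ω = p.1.2 then (1:ℝ) else 0) * (if Y p.2.1 ω = p.2.2 then (1:ℝ) else 0))
    with hTdef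
  set Cf : Ω → ℝ := fun ω => ∑ j : Fin k, if X j ω = Y j ω then (1:ℝ) else 0 with hCdef
  set Of : Ω → ℝ :=
    fun ω => ∑ p ∈ (Finset.univ : Finset (Fin k × Fin (2 ^ b))).offDiag, T p ω with hOdef
  set Sf : Ω → ℝ := fun ω => ∑ j, oneHotSketch X h r j ω * oneHotSketch Y h r j ω with hSdef
  -- ## basic randomness facts
  have hpm : ∀ i, ∀ᵐ ω ∂P, r i ω = 1 ∨ r i ω = -1 :=
    fun i => gcws_rad_ae (hrm i) (hrad i).1 (hrad i).2
  have hrzero : ∀ i, ∫ ω, r i ω ∂P = 0 :=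
    fun i => gcws_rad_integral (hrm i) (hrad i).1 (hpm i)
  have hallr : ∀ᵐ ω ∂P, ∀ i, r i ω = 1 ∨ r i ω = -1 := ae_all_iff.2 hpm
  -- ## measurability
  have hmchi : ∀ p q : Fin k × Fin (2 ^ b),
      Measurable fun ω => (if h p ω = h q ω then (1:ℝ) else 0) := fun p q =>
    (measurable_of_countable (fun z : Fin B × Fin B => if z.1 = z.2 then (1:ℝ) else 0)).comp
      ((hhm p).prodMk (hhm q))
  have hmav : ∀ i : Fin k × Fin (2 ^ b),
      Measurable fun ω => (if X i.1 ω = i.2 then (1:ℝ) else 0) := fun i =>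
    (measurable_of_countable (fun v : Fin (2 ^ b) => if v = i.2 then (1:ℝ) else 0)).comp
      (hXm i.1)
  have hmbv : ∀ i : Fin k × Fin (2 ^ b),
      Measurable fun ω => (if Y i.1 ω = i.2 then (1:ℝ) else 0) := fun i =>
    (measurable_of_countable (fun v : Fin (2 ^ b) => if v = i.2 then (1:ℝ) else 0)).comp
      (hYm i.1)
  have hmI : ∀ j : Fin k, Measurable fun ω => (if X j ω = Y j ω then (1:ℝ) else 0) := fun j =>
    (measurable_of_countable
      (fun z : Fin (2 ^ b) × Fin (2 ^ b) => if z.1 = z.2 then (1:ℝ) else 0)).comp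
      ((hXm j).prodMk (hYm j))
  have hmT : ∀ p, Measurable (T p) := by
    intro p
    exact ((hmchi p.1 p.2).mul ((hrm p.1).mul (hrm p.2))).mul ((hmav p.1).mul (hmbv p.2))
  have hmC : Measurable Cf := Finset.measurable_sum _ fun j _ => hmI j
  have hmO : Measurable Of := Finset.measurable_sum _ fun p _ => hmT p
  -- ## bounds and integrability
  have hTptw : ∀ ω, (∀ i, r i ω = 1 ∨ r i ω = -1) → ∀ p, |T p ω| ≤ 1 := by
    intro ω hω p
    refine gcws_abs_mul_le (gcws_abs_mul_le (gcws_abs_ite_le _) ?_)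
      (gcws_abs_mul_le (gcws_abs_ite_le _) (gcws_abs_ite_le _))
    refine gcws_abs_mul_le ?_ ?_ <;>
      [rcases hω p.1 with hh | hh; rcases hω p.2 with hh | hh] <;> rw [hh] <;> norm_num
  have hTbd : ∀ p, ∀ᵐ ω ∂P, |T p ω| ≤ 1 := fun p => by
    filter_upwards [hallr] with ω hω using hTptw ω hω p
  have hTint : ∀ p, Integrable (T p) P :=
    fun p => gcws_int_of_bound (hmT p).aestronglyMeasurable (hTbd p)
  have hTTint : ∀ p q, Integrable (fun ω => T p ω * T q ω) P := by
    intro p q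
    exact gcws_int_of_bound ((hmT p).mul (hmT q)).aestronglyMeasurable (by
      filter_upwards [hTbd p, hTbd q] with ω h1 h2 using gcws_abs_mul_le h1 h2)
  have hCbd : ∀ ω, |Cf ω| ≤ (k : ℝ) := by
    intro ω
    calc |Cf ω| ≤ ∑ j : Fin k, |if X j ω = Y j ω then (1:ℝ) else 0| :=
          Finset.abs_sum_le_sum_abs _ _
    _ ≤ ∑ _j : Fin k, (1:ℝ) := Finset.sum_le_sum fun j _ => gcws_abs_ite_le _
    _ = (k : ℝ) := by simp
  have hIint : ∀ j : Fin k, Integrable (fun ω => if X j ω = Y j ω then (1:ℝ) else 0) P :=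
    fun j => gcws_int_of_bound (hmI j).aestronglyMeasurable
      (ae_of_all P fun ω => gcws_abs_ite_le _)
  have hCint : Integrable Cf P := gcws_int_of_bound hmC.aestronglyMeasurable
    (ae_of_all P hCbd)
  have hOint : Integrable Of P := integrable_finset_sum _ fun p _ => hTint p
  -- ## the three independent groups
  have fact3 : ∀ (f : (Fin k × Fin (2 ^ b) → Fin B) → ℝ)
      (g : (Fin k × Fin (2 ^ b) → ℝ) → ℝ)
      (m : (Fin k → Fin (2 ^ b) × Fin (2 ^ b)) → ℝ), Measurable g →
      Integrable (fun ω => f (fun i => h i ω)) P →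
      Integrable (fun ω => g (fun i => r i ω)) P →
      Integrable (fun ω => m (fun j => (X j ω, Y j ω))) P →
      ∫ ω, f (fun i => h i ω) * g (fun i => r i ω) * m (fun j => (X j ω, Y j ω)) ∂P
        = (∫ ω, f (fun i => h i ω) ∂P) * (∫ ω, g (fun i => r i ω) ∂P)
          * (∫ ω, m (fun j => (X j ω, Y j ω)) ∂P) := by
    intro f g m hg hFi hGi hMi
    have hf : Measurable f := measurable_of_countable f
    have hm : Measurable m := measurable_of_countable m
    have hFG : IndepFun (fun ω => f (fun i => h i ω)) (fun ω => g (fun i => r i ω)) P :=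
      hhr.comp hf hg
    have hFGM : IndepFun (fun ω => f (fun i => h i ω) * g (fun i => r i ω))
        (fun ω => m (fun j => (X j ω, Y j ω))) P := by
      have := hsk_XY.comp (φ := fun p : (Fin k × Fin (2 ^ b) → Fin B) × (Fin k × Fin (2 ^ b) → ℝ)
        => f p.1 * g p.2) (ψ := m) ((hf.comp measurable_fst).mul (hg.comp measurable_snd)) hm
      exact this
    have h1 := hFGM.integral_mul_eq_mul_integral (hFG.integrable_mul hFi hGi).aestronglyMeasurable hMi.aestronglyMeasurable
    have h2 := hFG.integral_mul_eq_mul_integral hFi.aestronglyMeasurable hGi.aestronglyMeasurable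
    rw [← h2]
    exact h1
  -- ## expectation of indicator of collision
  have hEind : ∀ j : Fin k, ∫ ω, (if X j ω = Y j ω then (1:ℝ) else 0) ∂P = Pb := by
    intro j
    have hms : MeasurableSet {ω | X j ω = Y j ω} := by
      have : {ω | X j ω = Y j ω}
          = (fun ω => (X j ω, Y j ω)) ⁻¹' {z : Fin (2 ^ b) × Fin (2 ^ b) | z.1 = z.2} := rfl
      rw [this]
      exact ((hXm j).prodMk (hYm j)) ((Set.to_countable _).measurableSet)
    have : (fun ω => if X j ω = Y j ω then (1:ℝ) else 0)
        = Set.indicator {ω | X j ω = Y j ω} (fun _ => (1:ℝ)) := by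
      funext ω
      by_cases hc : X j ω = Y j ω <;>
        simp [hc, Set.indicator_apply, Set.mem_setOf_eq]
    rw [this, integral_indicator_const (1:ℝ) hms, measureReal_def, hcollision j, smul_eq_mul, mul_one,
      ENNReal.toReal_ofReal hPb0]
  have hEC : ∫ ω, Cf ω ∂P = (k : ℝ) * Pb := by
    rw [hCdef]
    rw [integral_finset_sum _ fun j _ => hIint j]
    simp [hEind]
  -- ## hash collision probability
  have hchiE : ∀ p q : Fin k × Fin (2 ^ b), p ≠ q →
      ∫ ω, (if h p ω = h q ω then (1:ℝ) else 0) ∂P = (B : ℝ)⁻¹ := by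
    intro p q hpq
    have hBne : (B : ℝ≥0∞) ≠ 0 := by
      simp only [ne_eq, Nat.cast_eq_zero]; omega
    have hsets : {ω | h p ω = h q ω} = ⋃ j : Fin B, (h p ⁻¹' {j} ∩ h q ⁻¹' {j}) := by
      ext ω
      simp only [Set.mem_setOf_eq, Set.mem_iUnion, Set.mem_inter_iff, Set.mem_preimage,
        Set.mem_singleton_iff]
      exact ⟨fun hh => ⟨h q ω, hh, rfl⟩, fun ⟨j, h1, h2⟩ => h1.trans h2.symm⟩
    have hmeas : ∀ j : Fin B, MeasurableSet (h p ⁻¹' {j} ∩ h q ⁻¹' {j}) := fun j =>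
      (hhm p (measurableSet_singleton j)).inter (hhm q (measurableSet_singleton j))
    have hdisj : Pairwise (Function.onFun Disjoint
        fun j : Fin B => h p ⁻¹' {j} ∩ h q ⁻¹' {j}) := by
      intro j j' hjj'
      rw [Function.onFun, Set.disjoint_left]
      rintro ω ⟨h1, _⟩ ⟨h2, _⟩
      exact hjj' ((Set.mem_singleton_iff.1 h1).symm.trans (Set.mem_singleton_iff.1 h2))
    have hPcoll : P {ω | h p ω = h q ω} = (B : ℝ≥0∞)⁻¹ := by
      rw [hsets, measure_iUnion hdisj hmeas, tsum_fintype]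
      have hterm : ∀ j : Fin B, P (h p ⁻¹' {j} ∩ h q ⁻¹' {j})
          = (B : ℝ≥0∞)⁻¹ * (B : ℝ≥0∞)⁻¹ := by
        intro j
        rw [(hhiid.indepFun hpq).measure_inter_preimage_eq_mul {j} {j}
          (measurableSet_singleton j) (measurableSet_singleton j)]
        have e1 : h p ⁻¹' {j} = {ω | h p ω = j} := rfl
        have e2 : h q ⁻¹' {j} = {ω | h q ω = j} := rfl
        rw [e1, e2, hunif p j, hunif q j]
      rw [Finset.sum_congr rfl fun j _ => hterm j, Finset.sum_const, Finset.card_univ,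
        Fintype.card_fin, nsmul_eq_mul, ← mul_assoc, ENNReal.mul_inv_cancel hBne
          (ENNReal.natCast_ne_top B), one_mul]
    have hms : MeasurableSet {ω | h p ω = h q ω} := by
      rw [hsets]; exact MeasurableSet.iUnion hmeas
    have : (fun ω => if h p ω = h q ω then (1:ℝ) else 0)
        = Set.indicator {ω | h p ω = h q ω} (fun _ => (1:ℝ)) := by
      funext ω
      by_cases hc : h p ω = h q ω <;> simp [hc, Set.indicator_apply, Set.mem_setOf_eq]
    rw [this, integral_indicator_const (1:ℝ) hms, measureReal_def, hPcoll, smul_eq_mul, mul_one]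
    simp
  -- ## pointwise expansion of the sketch inner product
  have hS1 : ∀ ω, Sf ω = ∑ i : Fin k × Fin (2 ^ b), ∑ i' : Fin k × Fin (2 ^ b), T (i, i') ω := by
    intro ω
    rw [hSdef]
    simp only [oneHotSketch, Finset.sum_mul_sum]
    rw [Finset.sum_comm]
    refine Finset.sum_congr rfl fun i _ => ?_
    rw [Finset.sum_comm]
    refine Finset.sum_congr rfl fun i' _ => ?_
    rw [gcws_sum_ite (h i ω) (h i' ω)
      ((if X i.1 ω = i.2 then (1:ℝ) else 0) * r i ω)
      ((if Y i'.1 ω = i'.2 then (1:ℝ) else 0) * r i' ω)]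
    rw [hTdef]
    ring
  have hS2 : ∀ ω, Sf ω = (∑ i : Fin k × Fin (2 ^ b), T (i, i) ω) + Of ω := by
    intro ω
    rw [hS1 ω, hOdef, ← Finset.sum_product', ← Finset.univ_product_univ,
      ← Finset.diag_union_offDiag,
      Finset.sum_union (Finset.disjoint_diag_offDiag _), Finset.sum_diag]
  have hdiagC : ∀ᵐ ω ∂P, (∑ i : Fin k × Fin (2 ^ b), T (i, i) ω) = Cf ω := by
    filter_upwards [hallr] with ω hω
    have hterm : ∀ i : Fin k × Fin (2 ^ b), T (i, i) ω
        = (if X i.1 ω = i.2 then (1:ℝ) else 0) * (if Y i.1 ω = i.2 then (1:ℝ) else 0) := by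
      intro i
      rw [hTdef]
      dsimp only
      rcases hω i with hh | hh <;> rw [hh] <;> simp
    rw [Finset.sum_congr rfl fun i _ => hterm i, hCdef]
    rw [Fintype.sum_prod_type]
    exact Finset.sum_congr rfl fun j _ => gcws_sum_ite2 (X j ω) (Y j ω)
  have hSae : Sf =ᵐ[P] fun ω => Cf ω + Of ω := by
    filter_upwards [hdiagC] with ω hω
    rw [hS2 ω, hω]
  -- ## mean of T terms off the diagonal
  have hET : ∀ p ∈ (Finset.univ : Finset (Fin k × Fin (2 ^ b))).offDiag,
      ∫ ω, T p ω ∂P = 0 := by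
    intro p hp
    have hne : p.1 ≠ p.2 := (Finset.mem_offDiag.1 hp).2.2
    have hfact := fact3 (fun η => if η p.1 = η p.2 then (1:ℝ) else 0)
      (fun ρ => ρ p.1 * ρ p.2)
      (fun w => (if (w p.1.1).1 = p.1.2 then (1:ℝ) else 0)
        * (if (w p.2.1).2 = p.2.2 then (1:ℝ) else 0))
      ((measurable_pi_apply p.1).mul (measurable_pi_apply p.2))
      (gcws_int_of_bound (hmchi p.1 p.2).aestronglyMeasurable
        (ae_of_all P fun ω => gcws_abs_ite_le _))
      (gcws_int_of_bound ((hrm p.1).mul (hrm p.2)).aestronglyMeasurable (by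
        filter_upwards [hallr] with ω hω
        refine gcws_abs_mul_le ?_ ?_ <;>
          [rcases hω p.1 with hh | hh; rcases hω p.2 with hh | hh] <;> rw [hh] <;> norm_num))
      (gcws_int_of_bound ((hmav p.1).mul (hmbv p.2)).aestronglyMeasurable
        (ae_of_all P fun ω => gcws_abs_mul_le (gcws_abs_ite_le _) (gcws_abs_ite_le _)))
    rw [hTdef]
    rw [hfact, gcws_pair_integral_zero hriid hrm hpm hrzero hne]
    ring
  have hEO : ∫ ω, Of ω ∂P = 0 := by
    rw [hOdef, integral_finset_sum _ fun p _ => hTint p]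
    exact Finset.sum_eq_zero hET
  have hES : ∫ ω, Sf ω ∂P = (k : ℝ) * Pb := by
    rw [integral_congr_ae hSae, integral_add hCint hOint, hEC, hEO, add_zero]

  -- ## more integrability helpers
  have hmW : Measurable (fun ω => fun j : Fin k => (X j ω, Y j ω)) :=
    measurable_pi_lambda _ fun j => (hXm j).prodMk (hYm j)
  have hmH : Measurable (fun ω => fun i : Fin k × Fin (2 ^ b) => h i ω) :=
    measurable_pi_lambda _ hhm
  have hMint : ∀ (m : (Fin k → Fin (2 ^ b) × Fin (2 ^ b)) → ℝ) (c : ℝ), (∀ w, |m w| ≤ c) →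
      Integrable (fun ω => m (fun j => (X j ω, Y j ω))) P := fun m c hc =>
    gcws_int_of_bound ((measurable_of_countable m).comp hmW).aestronglyMeasurable
      (ae_of_all P fun ω => hc _)
  have hFint : ∀ (f : (Fin k × Fin (2 ^ b) → Fin B) → ℝ) (c : ℝ), (∀ η, |f η| ≤ c) →
      Integrable (fun ω => f (fun i => h i ω)) P := fun f c hc =>
    gcws_int_of_bound ((measurable_of_countable f).comp hmH).aestronglyMeasurable
      (ae_of_all P fun ω => hc _)
  have hGint2 : ∀ p q : Fin k × Fin (2 ^ b), Integrable (fun ω => r p ω * r q ω) P := by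
    intro p q
    apply gcws_int_of_bound ((hrm p).mul (hrm q)).aestronglyMeasurable (C := 1)
    filter_upwards [hallr] with ω hω
    refine gcws_abs_mul_le ?_ ?_ <;>
      [rcases hω p with hh | hh; rcases hω q with hh | hh] <;> rw [hh] <;> norm_num
  have hGint4 : ∀ p1 p2 q1 q2 : Fin k × Fin (2 ^ b),
      Integrable (fun ω => r p1 ω * r p2 ω * (r q1 ω * r q2 ω)) P := by
    intro p1 p2 q1 q2
    apply gcws_int_of_bound (((hrm p1).mul (hrm p2)).mul
      ((hrm q1).mul (hrm q2))).aestronglyMeasurable (C := 1)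
    filter_upwards [hallr] with ω hω
    refine gcws_abs_mul_le (gcws_abs_mul_le ?_ ?_) (gcws_abs_mul_le ?_ ?_) <;>
      [rcases hω p1 with hh | hh; rcases hω p2 with hh | hh;
       rcases hω q1 with hh | hh; rcases hω q2 with hh | hh] <;> rw [hh] <;> norm_num
  have hsum_bd : ∀ w : Fin k → Fin (2 ^ b) × Fin (2 ^ b),
      |∑ j, if (w j).1 = (w j).2 then (1:ℝ) else 0| ≤ (k:ℝ) := by
    intro w
    calc |∑ j, if (w j).1 = (w j).2 then (1:ℝ) else 0|
        ≤ ∑ j : Fin k, |if (w j).1 = (w j).2 then (1:ℝ) else 0| := Finset.abs_sum_le_sum_abs _ _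
    _ ≤ ∑ _j : Fin k, (1:ℝ) := Finset.sum_le_sum fun j _ => gcws_abs_ite_le _
    _ = (k : ℝ) := by simp
  -- ## E[C * O] = 0
  have hCTint : ∀ p, Integrable (fun ω => Cf ω * T p ω) P := by
    intro p
    apply gcws_int_of_bound (hmC.mul (hmT p)).aestronglyMeasurable (C := (k:ℝ) * 1)
    filter_upwards [hTbd p] with ω h1
    rw [Pi.mul_apply, abs_mul]
    exact mul_le_mul (hCbd ω) h1 (abs_nonneg _) (Nat.cast_nonneg k)
  have hECO : ∫ ω, Cf ω * Of ω ∂P = 0 := by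
    have hstep : ∫ ω, Cf ω * Of ω ∂P
        = ∫ ω, ∑ p ∈ (Finset.univ : Finset (Fin k × Fin (2 ^ b))).offDiag, Cf ω * T p ω ∂P := by
      refine integral_congr_ae (ae_of_all P fun ω => ?_)
      rw [hOdef]
      exact Finset.mul_sum _ _ _
    rw [hstep, integral_finset_sum _ fun p _ => hCTint p]
    refine Finset.sum_eq_zero fun p hp => ?_
    have hne : p.1 ≠ p.2 := (Finset.mem_offDiag.1 hp).2.2
    have hfact := fact3 (fun η : Fin k × Fin (2 ^ b) → Fin B =>
        if η p.1 = η p.2 then (1:ℝ) else 0)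
      (fun ρ : Fin k × Fin (2 ^ b) → ℝ => ρ p.1 * ρ p.2)
      (fun w : Fin k → Fin (2 ^ b) × Fin (2 ^ b) =>
        (∑ j, if (w j).1 = (w j).2 then (1:ℝ) else 0)
        * ((if (w p.1.1).1 = p.1.2 then (1:ℝ) else 0)
          * (if (w p.2.1).2 = p.2.2 then (1:ℝ) else 0)))
      ((measurable_pi_apply p.1).mul (measurable_pi_apply p.2))
      (hFint (fun η : Fin k × Fin (2 ^ b) → Fin B => if η p.1 = η p.2 then (1:ℝ) else 0) 1
        fun η => gcws_abs_ite_le _) (hGint2 p.1 p.2)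
      (hMint (fun w : Fin k → Fin (2 ^ b) × Fin (2 ^ b) =>
        (∑ j, if (w j).1 = (w j).2 then (1:ℝ) else 0)
        * ((if (w p.1.1).1 = p.1.2 then (1:ℝ) else 0)
          * (if (w p.2.1).2 = p.2.2 then (1:ℝ) else 0))) ((k:ℝ) * 1) fun w => by
        rw [abs_mul]
        exact mul_le_mul (hsum_bd w)
          (gcws_abs_mul_le (gcws_abs_ite_le _) (gcws_abs_ite_le _)) (abs_nonneg _)
          (Nat.cast_nonneg k))
    have hcongr : ∫ ω, Cf ω * T p ω ∂P
        = ∫ ω, (if h p.1 ω = h p.2 ω then (1:ℝ) else 0) * (r p.1 ω * r p.2 ω)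
            * ((∑ j, if X j ω = Y j ω then (1:ℝ) else 0)
              * ((if X p.1.1 ω = p.1.2 then (1:ℝ) else 0)
                * (if Y p.2.1 ω = p.2.2 then (1:ℝ) else 0))) ∂P := by
      refine integral_congr_ae (ae_of_all P fun ω => ?_)
      rw [hTdef, hCdef]
      dsimp only
      ring
    calc ∫ ω, Cf ω * T p ω ∂P
        = ∫ ω, (if h p.1 ω = h p.2 ω then (1:ℝ) else 0) * (r p.1 ω * r p.2 ω)
            * ((∑ j, if X j ω = Y j ω then (1:ℝ) else 0)
              * ((if X p.1.1 ω = p.1.2 then (1:ℝ) else 0)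
                * (if Y p.2.1 ω = p.2.2 then (1:ℝ) else 0))) ∂P := hcongr
    _ = (∫ ω, (if h p.1 ω = h p.2 ω then (1:ℝ) else 0) ∂P)
          * (∫ ω, r p.1 ω * r p.2 ω ∂P)
          * (∫ ω, (∑ j, if X j ω = Y j ω then (1:ℝ) else 0)
              * ((if X p.1.1 ω = p.1.2 then (1:ℝ) else 0)
                * (if Y p.2.1 ω = p.2.2 then (1:ℝ) else 0)) ∂P) := hfact
    _ = 0 := by rw [gcws_pair_integral_zero hriid hrm hpm hrzero hne]; ring
  -- ## E[C^2]
  have hEII : ∀ j j' : Fin k, j ≠ j' → ∫ ω, (if X j ω = Y j ω then (1:ℝ) else 0)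
      * (if X j' ω = Y j' ω then (1:ℝ) else 0) ∂P = Pb ^ 2 := by
    intro j j' hjj
    have hpair : IndepFun (fun ω => (X j ω, Y j ω)) (fun ω => (X j' ω, Y j' ω)) P :=
      hpairs_indep.indepFun hjj
    have hind : IndepFun (fun ω => if X j ω = Y j ω then (1:ℝ) else 0)
        (fun ω => if X j' ω = Y j' ω then (1:ℝ) else 0) P :=
      hpair.comp (measurable_of_countable
          (fun z : Fin (2 ^ b) × Fin (2 ^ b) => if z.1 = z.2 then (1:ℝ) else 0))
        (measurable_of_countable
          (fun z : Fin (2 ^ b) × Fin (2 ^ b) => if z.1 = z.2 then (1:ℝ) else 0))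
    have hmul := hind.integral_mul_eq_mul_integral (hIint j).aestronglyMeasurable (hIint j').aestronglyMeasurable
    calc ∫ ω, (if X j ω = Y j ω then (1:ℝ) else 0)
          * (if X j' ω = Y j' ω then (1:ℝ) else 0) ∂P
        = (∫ ω, (if X j ω = Y j ω then (1:ℝ) else 0) ∂P)
          * (∫ ω, (if X j' ω = Y j' ω then (1:ℝ) else 0) ∂P) := hmul
    _ = Pb ^ 2 := by rw [hEind j, hEind j']; ring
  have hIIint : ∀ j j' : Fin k, Integrable (fun ω => (if X j ω = Y j ω then (1:ℝ) else 0)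
      * (if X j' ω = Y j' ω then (1:ℝ) else 0)) P := fun j j' =>
    gcws_int_of_bound ((hmI j).mul (hmI j')).aestronglyMeasurable
      (ae_of_all P fun ω => gcws_abs_mul_le (gcws_abs_ite_le _) (gcws_abs_ite_le _))
  have hEC2 : ∫ ω, Cf ω ^ 2 ∂P = (k:ℝ) * Pb + ((k:ℝ) ^ 2 - (k:ℝ)) * Pb ^ 2 := by
    have hptw : ∀ ω, Cf ω ^ 2
        = (∑ j : Fin k, (if X j ω = Y j ω then (1:ℝ) else 0)
            * (if X j ω = Y j ω then (1:ℝ) else 0))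
          + ∑ q ∈ (Finset.univ : Finset (Fin k)).offDiag,
              (if X q.1 ω = Y q.1 ω then (1:ℝ) else 0)
              * (if X q.2 ω = Y q.2 ω then (1:ℝ) else 0) := by
      intro ω
      rw [hCdef]
      dsimp only
      rw [sq, Finset.sum_mul_sum, ← Finset.sum_product', ← Finset.diag_union_offDiag,
        Finset.sum_union (Finset.disjoint_diag_offDiag _), Finset.sum_diag]
    rw [integral_congr_ae (ae_of_all P hptw),
      integral_add (integrable_finset_sum _ fun j _ => hIIint j j)
        (integrable_finset_sum _ fun q _ => hIIint q.1 q.2),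
      integral_finset_sum _ fun j _ => hIIint j j,
      integral_finset_sum _ fun q _ => hIIint q.1 q.2]
    have hdg : ∀ j : Fin k, ∫ ω, (if X j ω = Y j ω then (1:ℝ) else 0)
        * (if X j ω = Y j ω then (1:ℝ) else 0) ∂P = Pb := by
      intro j
      have : ∀ ω, (if X j ω = Y j ω then (1:ℝ) else 0)
          * (if X j ω = Y j ω then (1:ℝ) else 0) = (if X j ω = Y j ω then (1:ℝ) else 0) := by
        intro ω; by_cases hc : X j ω = Y j ω <;> simp [hc]
      rw [integral_congr_ae (ae_of_all P this), hEind j]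
    rw [Finset.sum_congr rfl fun j _ => hdg j,
      Finset.sum_congr rfl fun q hq => hEII q.1 q.2 (Finset.mem_offDiag.1 hq).2.2]
    rw [Finset.sum_const, Finset.sum_const, Finset.card_univ, Fintype.card_fin,
      Finset.offDiag_card, Finset.card_univ, Fintype.card_fin]
    have hle : k ≤ k * k := Nat.le_mul_of_pos_left k (by omega)
    rw [nsmul_eq_mul, nsmul_eq_mul, Nat.cast_sub hle]
    push_cast
    ring

  -- ## second moment of O
  set E1 : (Fin k × Fin (2 ^ b)) × (Fin k × Fin (2 ^ b)) → ℝ := fun p =>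
    ∫ ω, (if X p.1.1 ω = p.1.2 then (1:ℝ) else 0) * (if Y p.2.1 ω = p.2.2 then (1:ℝ) else 0) ∂P
    with hE1def
  set E2 : (Fin k × Fin (2 ^ b)) × (Fin k × Fin (2 ^ b)) → ℝ := fun p =>
    ∫ ω, ((if X p.1.1 ω = p.1.2 then (1:ℝ) else 0) * (if Y p.1.1 ω = p.1.2 then (1:ℝ) else 0))
      * ((if X p.2.1 ω = p.2.2 then (1:ℝ) else 0)
        * (if Y p.2.1 ω = p.2.2 then (1:ℝ) else 0)) ∂P with hE2def
  have hTT : ∀ p ∈ (Finset.univ : Finset (Fin k × Fin (2 ^ b))).offDiag,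
      ∀ q ∈ (Finset.univ : Finset (Fin k × Fin (2 ^ b))).offDiag,
      ∫ ω, T p ω * T q ω ∂P
        = (if q = p then (B:ℝ)⁻¹ * E1 p else 0)
          + (if q = (p.2, p.1) then (B:ℝ)⁻¹ * E2 p else 0) := by
    intro p hp q hq
    have hpne : p.1 ≠ p.2 := (Finset.mem_offDiag.1 hp).2.2
    have hqne : q.1 ≠ q.2 := (Finset.mem_offDiag.1 hq).2.2
    by_cases hqp : q = p
    · subst hqp
      have hqs : q ≠ (q.2, q.1) := fun he => hpne (congrArg Prod.fst he)
      rw [if_pos rfl, if_neg hqs, add_zero]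
      have hfact := fact3 (fun η : Fin k × Fin (2 ^ b) → Fin B =>
          if η q.1 = η q.2 then (1:ℝ) else 0)
        (fun _ : Fin k × Fin (2 ^ b) → ℝ => (1:ℝ))
        (fun w : Fin k → Fin (2 ^ b) × Fin (2 ^ b) =>
          (if (w q.1.1).1 = q.1.2 then (1:ℝ) else 0) * (if (w q.2.1).2 = q.2.2 then (1:ℝ) else 0))
        measurable_const
        (hFint (fun η : Fin k × Fin (2 ^ b) → Fin B => if η q.1 = η q.2 then (1:ℝ) else 0) 1
          fun η => gcws_abs_ite_le _)
        (integrable_const 1)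
        (hMint (fun w : Fin k → Fin (2 ^ b) × Fin (2 ^ b) =>
          (if (w q.1.1).1 = q.1.2 then (1:ℝ) else 0)
            * (if (w q.2.1).2 = q.2.2 then (1:ℝ) else 0)) 1
          fun w => gcws_abs_mul_le (gcws_abs_ite_le _) (gcws_abs_ite_le _))
      have hcongr : ∫ ω, T q ω * T q ω ∂P
          = ∫ ω, (if h q.1 ω = h q.2 ω then (1:ℝ) else 0) * (1:ℝ)
              * ((if X q.1.1 ω = q.1.2 then (1:ℝ) else 0)
                * (if Y q.2.1 ω = q.2.2 then (1:ℝ) else 0)) ∂P := by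
        refine integral_congr_ae ?_
        filter_upwards [hallr] with ω hω
        rw [hTdef]
        dsimp only
        rcases hω q.1 with h1 | h1 <;> rcases hω q.2 with h2 | h2 <;> rw [h1, h2] <;>
          by_cases c1 : h q.1 ω = h q.2 ω <;> by_cases c2 : X q.1.1 ω = q.1.2 <;>
          by_cases c3 : Y q.2.1 ω = q.2.2 <;> simp [c1, c2, c3]
      calc ∫ ω, T q ω * T q ω ∂P
          = ∫ ω, (if h q.1 ω = h q.2 ω then (1:ℝ) else 0) * (1:ℝ)
              * ((if X q.1.1 ω = q.1.2 then (1:ℝ) else 0)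
                * (if Y q.2.1 ω = q.2.2 then (1:ℝ) else 0)) ∂P := hcongr
      _ = (∫ ω, (if h q.1 ω = h q.2 ω then (1:ℝ) else 0) ∂P) * (∫ ω, (1:ℝ) ∂P)
            * (∫ ω, (if X q.1.1 ω = q.1.2 then (1:ℝ) else 0)
              * (if Y q.2.1 ω = q.2.2 then (1:ℝ) else 0) ∂P) := hfact
      _ = (B:ℝ)⁻¹ * E1 q := by
            rw [hchiE q.1 q.2 hqne, hE1def]
            simp
    · by_cases hqs : q = (p.2, p.1)
      · subst hqs
        have hne1 : (p.2, p.1) ≠ p := fun he => hpne ((congrArg Prod.snd he).symm ▸ rfl)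
        rw [if_neg hne1, if_pos rfl, zero_add]
        have hfact := fact3 (fun η : Fin k × Fin (2 ^ b) → Fin B =>
            if η p.1 = η p.2 then (1:ℝ) else 0)
          (fun _ : Fin k × Fin (2 ^ b) → ℝ => (1:ℝ))
          (fun w : Fin k → Fin (2 ^ b) × Fin (2 ^ b) =>
            ((if (w p.1.1).1 = p.1.2 then (1:ℝ) else 0)
              * (if (w p.1.1).2 = p.1.2 then (1:ℝ) else 0))
            * ((if (w p.2.1).1 = p.2.2 then (1:ℝ) else 0)
              * (if (w p.2.1).2 = p.2.2 then (1:ℝ) else 0)))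
          measurable_const
          (hFint (fun η : Fin k × Fin (2 ^ b) → Fin B => if η p.1 = η p.2 then (1:ℝ) else 0) 1
            fun η => gcws_abs_ite_le _)
          (integrable_const 1)
          (hMint (fun w : Fin k → Fin (2 ^ b) × Fin (2 ^ b) =>
            ((if (w p.1.1).1 = p.1.2 then (1:ℝ) else 0)
              * (if (w p.1.1).2 = p.1.2 then (1:ℝ) else 0))
            * ((if (w p.2.1).1 = p.2.2 then (1:ℝ) else 0)
              * (if (w p.2.1).2 = p.2.2 then (1:ℝ) else 0))) 1
            fun w => gcws_abs_mul_le
              (gcws_abs_mul_le (gcws_abs_ite_le _) (gcws_abs_ite_le _))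
              (gcws_abs_mul_le (gcws_abs_ite_le _) (gcws_abs_ite_le _)))
        have hcongr : ∫ ω, T p ω * T (p.2, p.1) ω ∂P
            = ∫ ω, (if h p.1 ω = h p.2 ω then (1:ℝ) else 0) * (1:ℝ)
                * (((if X p.1.1 ω = p.1.2 then (1:ℝ) else 0)
                    * (if Y p.1.1 ω = p.1.2 then (1:ℝ) else 0))
                  * ((if X p.2.1 ω = p.2.2 then (1:ℝ) else 0)
                    * (if Y p.2.1 ω = p.2.2 then (1:ℝ) else 0))) ∂P := by
          refine integral_congr_ae ?_
          filter_upwards [hallr] with ω hω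
          rw [hTdef]
          dsimp only
          by_cases c1 : h p.1 ω = h p.2 ω
          · rw [if_pos c1, if_pos c1.symm]
            rcases hω p.1 with h1 | h1 <;> rcases hω p.2 with h2 | h2 <;> rw [h1, h2] <;> ring
          · have c1' : ¬ h p.2 ω = h p.1 ω := fun hx => c1 hx.symm
            rw [if_neg c1, if_neg c1']
            ring
        calc ∫ ω, T p ω * T (p.2, p.1) ω ∂P
            = ∫ ω, (if h p.1 ω = h p.2 ω then (1:ℝ) else 0) * (1:ℝ)
                * (((if X p.1.1 ω = p.1.2 then (1:ℝ) else 0)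
                    * (if Y p.1.1 ω = p.1.2 then (1:ℝ) else 0))
                  * ((if X p.2.1 ω = p.2.2 then (1:ℝ) else 0)
                    * (if Y p.2.1 ω = p.2.2 then (1:ℝ) else 0))) ∂P := hcongr
        _ = (∫ ω, (if h p.1 ω = h p.2 ω then (1:ℝ) else 0) ∂P) * (∫ ω, (1:ℝ) ∂P)
              * (∫ ω, ((if X p.1.1 ω = p.1.2 then (1:ℝ) else 0)
                    * (if Y p.1.1 ω = p.1.2 then (1:ℝ) else 0))
                  * ((if X p.2.1 ω = p.2.2 then (1:ℝ) else 0)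
                    * (if Y p.2.1 ω = p.2.2 then (1:ℝ) else 0)) ∂P) := hfact
        _ = (B:ℝ)⁻¹ * E2 p := by
              rw [hchiE p.1 p.2 hpne, hE2def]
              simp
      · rw [if_neg hqp, if_neg hqs, add_zero]
        have hfact := fact3 (fun η : Fin k × Fin (2 ^ b) → Fin B =>
            (if η p.1 = η p.2 then (1:ℝ) else 0) * (if η q.1 = η q.2 then (1:ℝ) else 0))
          (fun ρ : Fin k × Fin (2 ^ b) → ℝ => ρ p.1 * ρ p.2 * (ρ q.1 * ρ q.2))
          (fun w : Fin k → Fin (2 ^ b) × Fin (2 ^ b) =>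
            ((if (w p.1.1).1 = p.1.2 then (1:ℝ) else 0)
              * (if (w p.2.1).2 = p.2.2 then (1:ℝ) else 0))
            * ((if (w q.1.1).1 = q.1.2 then (1:ℝ) else 0)
              * (if (w q.2.1).2 = q.2.2 then (1:ℝ) else 0)))
          (((measurable_pi_apply p.1).mul (measurable_pi_apply p.2)).mul
            ((measurable_pi_apply q.1).mul (measurable_pi_apply q.2)))
          (hFint (fun η : Fin k × Fin (2 ^ b) → Fin B =>
            (if η p.1 = η p.2 then (1:ℝ) else 0) * (if η q.1 = η q.2 then (1:ℝ) else 0)) 1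
            fun η => gcws_abs_mul_le (gcws_abs_ite_le _) (gcws_abs_ite_le _))
          (hGint4 p.1 p.2 q.1 q.2)
          (hMint (fun w : Fin k → Fin (2 ^ b) × Fin (2 ^ b) =>
            ((if (w p.1.1).1 = p.1.2 then (1:ℝ) else 0)
              * (if (w p.2.1).2 = p.2.2 then (1:ℝ) else 0))
            * ((if (w q.1.1).1 = q.1.2 then (1:ℝ) else 0)
              * (if (w q.2.1).2 = q.2.2 then (1:ℝ) else 0))) 1
            fun w => gcws_abs_mul_le
              (gcws_abs_mul_le (gcws_abs_ite_le _) (gcws_abs_ite_le _))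
              (gcws_abs_mul_le (gcws_abs_ite_le _) (gcws_abs_ite_le _)))
        have hcongr : ∫ ω, T p ω * T q ω ∂P
            = ∫ ω, ((if h p.1 ω = h p.2 ω then (1:ℝ) else 0)
                  * (if h q.1 ω = h q.2 ω then (1:ℝ) else 0))
                * (r p.1 ω * r p.2 ω * (r q.1 ω * r q.2 ω))
                * (((if X p.1.1 ω = p.1.2 then (1:ℝ) else 0)
                    * (if Y p.2.1 ω = p.2.2 then (1:ℝ) else 0))
                  * ((if X q.1.1 ω = q.1.2 then (1:ℝ) else 0)
                    * (if Y q.2.1 ω = q.2.2 then (1:ℝ) else 0))) ∂P := by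
          refine integral_congr_ae (ae_of_all P fun ω => ?_)
          rw [hTdef]
          dsimp only
          ring
        have hquad : ∫ ω, r p.1 ω * r p.2 ω * (r q.1 ω * r q.2 ω) ∂P = 0 :=
          gcws_quad_integral_zero hriid hrm hpm hrzero hpne hqne
            (fun he => hqp (Prod.ext_iff.2 ⟨he.1, he.2⟩))
            (fun he => hqs (Prod.ext_iff.2 ⟨he.1, he.2⟩))
        calc ∫ ω, T p ω * T q ω ∂P
            = ∫ ω, ((if h p.1 ω = h p.2 ω then (1:ℝ) else 0)
                  * (if h q.1 ω = h q.2 ω then (1:ℝ) else 0))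
                * (r p.1 ω * r p.2 ω * (r q.1 ω * r q.2 ω))
                * (((if X p.1.1 ω = p.1.2 then (1:ℝ) else 0)
                    * (if Y p.2.1 ω = p.2.2 then (1:ℝ) else 0))
                  * ((if X q.1.1 ω = q.1.2 then (1:ℝ) else 0)
                    * (if Y q.2.1 ω = q.2.2 then (1:ℝ) else 0))) ∂P := hcongr
        _ = (∫ ω, (if h p.1 ω = h p.2 ω then (1:ℝ) else 0)
                  * (if h q.1 ω = h q.2 ω then (1:ℝ) else 0) ∂P)
              * (∫ ω, r p.1 ω * r p.2 ω * (r q.1 ω * r q.2 ω) ∂P)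
              * (∫ ω, ((if X p.1.1 ω = p.1.2 then (1:ℝ) else 0)
                    * (if Y p.2.1 ω = p.2.2 then (1:ℝ) else 0))
                  * ((if X q.1.1 ω = q.1.2 then (1:ℝ) else 0)
                    * (if Y q.2.1 ω = q.2.2 then (1:ℝ) else 0)) ∂P) := hfact
        _ = 0 := by rw [hquad]; ring

  -- ## inner sums
  have hinner : ∀ p ∈ (Finset.univ : Finset (Fin k × Fin (2 ^ b))).offDiag,
      (∑ q ∈ (Finset.univ : Finset (Fin k × Fin (2 ^ b))).offDiag, ∫ ω, T p ω * T q ω ∂P)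
        = (B:ℝ)⁻¹ * E1 p + (B:ℝ)⁻¹ * E2 p := by
    intro p hp
    have hpne : p.1 ≠ p.2 := (Finset.mem_offDiag.1 hp).2.2
    have hswap : (p.2, p.1) ∈ (Finset.univ : Finset (Fin k × Fin (2 ^ b))).offDiag :=
      Finset.mem_offDiag.2 ⟨Finset.mem_univ _, Finset.mem_univ _, fun he => hpne he.symm⟩
    rw [Finset.sum_congr rfl fun q hq => hTT p hp q hq, Finset.sum_add_distrib,
      Finset.sum_ite_eq' _ p (fun _ => (B:ℝ)⁻¹ * E1 p),
      Finset.sum_ite_eq' _ (p.2, p.1) (fun _ => (B:ℝ)⁻¹ * E2 p),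
      if_pos hp, if_pos hswap]
  -- ## pointwise sums of indicators
  have hsum_av : ∀ ω, (∑ i : Fin k × Fin (2 ^ b), if X i.1 ω = i.2 then (1:ℝ) else 0)
      = (k:ℝ) := by
    intro ω
    rw [Fintype.sum_prod_type, Finset.sum_congr rfl fun j _ => gcws_sum_ite1 (X j ω)]
    simp
  have hsum_bv : ∀ ω, (∑ i : Fin k × Fin (2 ^ b), if Y i.1 ω = i.2 then (1:ℝ) else 0)
      = (k:ℝ) := by
    intro ω
    rw [Fintype.sum_prod_type, Finset.sum_congr rfl fun j _ => gcws_sum_ite1 (Y j ω)]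
    simp
  have hsum_ab : ∀ ω, (∑ i : Fin k × Fin (2 ^ b),
      (if X i.1 ω = i.2 then (1:ℝ) else 0) * (if Y i.1 ω = i.2 then (1:ℝ) else 0)) = Cf ω := by
    intro ω
    rw [Fintype.sum_prod_type, Finset.sum_congr rfl fun j _ => gcws_sum_ite2 (X j ω) (Y j ω),
      hCdef]
  have hptwE1 : ∀ ω, (∑ p ∈ (Finset.univ : Finset (Fin k × Fin (2 ^ b))).offDiag,
      (if X p.1.1 ω = p.1.2 then (1:ℝ) else 0) * (if Y p.2.1 ω = p.2.2 then (1:ℝ) else 0))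
      = (k:ℝ) * (k:ℝ) - Cf ω := by
    intro ω
    have htot : (∑ p ∈ (Finset.univ : Finset (Fin k × Fin (2 ^ b))) ×ˢ (Finset.univ : Finset (Fin k × Fin (2 ^ b))),
        (if X p.1.1 ω = p.1.2 then (1:ℝ) else 0) * (if Y p.2.1 ω = p.2.2 then (1:ℝ) else 0))
        = (k:ℝ) * (k:ℝ) := by
      rw [Finset.sum_product]
      dsimp only
      rw [← Finset.sum_mul_sum (f := fun x : Fin k × Fin (2 ^ b) => if X x.1 ω = x.2 then (1:ℝ) else 0)
        (g := fun y : Fin k × Fin (2 ^ b) => if Y y.1 ω = y.2 then (1:ℝ) else 0), hsum_av ω, hsum_bv ω]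
    have hsplit := Finset.sum_union (f := fun p : (Fin k × Fin (2 ^ b)) × (Fin k × Fin (2 ^ b))
        => (if X p.1.1 ω = p.1.2 then (1:ℝ) else 0) * (if Y p.2.1 ω = p.2.2 then (1:ℝ) else 0))
      (Finset.disjoint_diag_offDiag (Finset.univ : Finset (Fin k × Fin (2 ^ b))))
    rw [Finset.diag_union_offDiag, htot, Finset.sum_diag] at hsplit
    have hdg : (∑ i : Fin k × Fin (2 ^ b),
        (if X i.1 ω = i.2 then (1:ℝ) else 0) * (if Y i.1 ω = i.2 then (1:ℝ) else 0)) = Cf ω :=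
      hsum_ab ω
    rw [hdg] at hsplit
    linarith
  have hptwE2 : ∀ ω, (∑ p ∈ (Finset.univ : Finset (Fin k × Fin (2 ^ b))).offDiag,
      ((if X p.1.1 ω = p.1.2 then (1:ℝ) else 0) * (if Y p.1.1 ω = p.1.2 then (1:ℝ) else 0))
      * ((if X p.2.1 ω = p.2.2 then (1:ℝ) else 0) * (if Y p.2.1 ω = p.2.2 then (1:ℝ) else 0)))
      = Cf ω ^ 2 - Cf ω := by
    intro ω
    have htot : (∑ p ∈ (Finset.univ : Finset (Fin k × Fin (2 ^ b))) ×ˢ (Finset.univ : Finset (Fin k × Fin (2 ^ b))),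
        ((if X p.1.1 ω = p.1.2 then (1:ℝ) else 0) * (if Y p.1.1 ω = p.1.2 then (1:ℝ) else 0))
        * ((if X p.2.1 ω = p.2.2 then (1:ℝ) else 0) * (if Y p.2.1 ω = p.2.2 then (1:ℝ) else 0)))
        = Cf ω ^ 2 := by
      rw [Finset.sum_product]
      dsimp only
      rw [← Finset.sum_mul_sum (f := fun x : Fin k × Fin (2 ^ b) =>
          (if X x.1 ω = x.2 then (1:ℝ) else 0) * (if Y x.1 ω = x.2 then (1:ℝ) else 0))
        (g := fun y : Fin k × Fin (2 ^ b) =>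
          (if X y.1 ω = y.2 then (1:ℝ) else 0) * (if Y y.1 ω = y.2 then (1:ℝ) else 0)), hsum_ab ω]
      ring
    have hsplit := Finset.sum_union (f := fun p : (Fin k × Fin (2 ^ b)) × (Fin k × Fin (2 ^ b))
        => ((if X p.1.1 ω = p.1.2 then (1:ℝ) else 0) * (if Y p.1.1 ω = p.1.2 then (1:ℝ) else 0))
        * ((if X p.2.1 ω = p.2.2 then (1:ℝ) else 0) * (if Y p.2.1 ω = p.2.2 then (1:ℝ) else 0)))
      (Finset.disjoint_diag_offDiag (Finset.univ : Finset (Fin k × Fin (2 ^ b))))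
    rw [Finset.diag_union_offDiag, htot, Finset.sum_diag] at hsplit
    have hdg : (∑ i : Fin k × Fin (2 ^ b),
        ((if X i.1 ω = i.2 then (1:ℝ) else 0) * (if Y i.1 ω = i.2 then (1:ℝ) else 0))
        * ((if X i.1 ω = i.2 then (1:ℝ) else 0) * (if Y i.1 ω = i.2 then (1:ℝ) else 0)))
        = Cf ω := by
      rw [Finset.sum_congr rfl fun i _ => ?_, hsum_ab ω]
      by_cases c1 : X i.1 ω = i.2 <;> by_cases c2 : Y i.1 ω = i.2 <;> simp [c1, c2]
    rw [hdg] at hsplit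
    linarith
  -- ## integrability of indicator products
  have habint : ∀ p : (Fin k × Fin (2 ^ b)) × (Fin k × Fin (2 ^ b)),
      Integrable (fun ω => (if X p.1.1 ω = p.1.2 then (1:ℝ) else 0)
        * (if Y p.2.1 ω = p.2.2 then (1:ℝ) else 0)) P := fun p =>
    gcws_int_of_bound ((hmav p.1).mul (hmbv p.2)).aestronglyMeasurable
      (ae_of_all P fun ω => gcws_abs_mul_le (gcws_abs_ite_le _) (gcws_abs_ite_le _))
  have hab2int : ∀ p : (Fin k × Fin (2 ^ b)) × (Fin k × Fin (2 ^ b)),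
      Integrable (fun ω => ((if X p.1.1 ω = p.1.2 then (1:ℝ) else 0)
        * (if Y p.1.1 ω = p.1.2 then (1:ℝ) else 0))
        * ((if X p.2.1 ω = p.2.2 then (1:ℝ) else 0)
          * (if Y p.2.1 ω = p.2.2 then (1:ℝ) else 0))) P := fun p =>
    gcws_int_of_bound (((hmav p.1).mul (hmbv p.1)).mul
        ((hmav p.2).mul (hmbv p.2))).aestronglyMeasurable
      (ae_of_all P fun ω => gcws_abs_mul_le
        (gcws_abs_mul_le (gcws_abs_ite_le _) (gcws_abs_ite_le _))
        (gcws_abs_mul_le (gcws_abs_ite_le _) (gcws_abs_ite_le _)))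
  have hC2int : Integrable (fun ω => Cf ω ^ 2) P := by
    apply gcws_int_of_bound (hmC.pow_const 2).aestronglyMeasurable (C := (k:ℝ) ^ 2)
    refine ae_of_all P fun ω => ?_
    rw [abs_pow]
    exact pow_le_pow_left₀ (abs_nonneg _) (hCbd ω) 2
  -- ## summing E1 and E2
  have hsumE1 : (∑ p ∈ (Finset.univ : Finset (Fin k × Fin (2 ^ b))).offDiag, E1 p)
      = (k:ℝ) * (k:ℝ) - (k:ℝ) * Pb := by
    rw [hE1def, ← integral_finset_sum _ fun p _ => habint p,
      integral_congr_ae (ae_of_all P hptwE1),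
      integral_sub (integrable_const _) hCint, integral_const, hEC]
    simp
  have hsumE2 : (∑ p ∈ (Finset.univ : Finset (Fin k × Fin (2 ^ b))).offDiag, E2 p)
      = (∫ ω, Cf ω ^ 2 ∂P) - (k:ℝ) * Pb := by
    rw [hE2def, ← integral_finset_sum _ fun p _ => hab2int p,
      integral_congr_ae (ae_of_all P hptwE2),
      integral_sub hC2int hCint, hEC]
  -- ## E[O * O]
  have hEO2 : ∫ ω, Of ω * Of ω ∂P
      = (B:ℝ)⁻¹ * ((k:ℝ) * (k:ℝ) - (k:ℝ) * Pb)
        + (B:ℝ)⁻¹ * ((∫ ω, Cf ω ^ 2 ∂P) - (k:ℝ) * Pb) := by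
    have hptw : ∀ ω, Of ω * Of ω
        = ∑ p ∈ (Finset.univ : Finset (Fin k × Fin (2 ^ b))).offDiag,
          ∑ q ∈ (Finset.univ : Finset (Fin k × Fin (2 ^ b))).offDiag, T p ω * T q ω := by
      intro ω
      rw [hOdef]
      dsimp only
      rw [Finset.sum_mul_sum]
    rw [integral_congr_ae (ae_of_all P hptw),
      integral_finset_sum _ fun p _ => integrable_finset_sum _ fun q _ => hTTint p q,
      Finset.sum_congr rfl fun p hp =>
        (integral_finset_sum _ fun q _ => hTTint p q).trans (hinner p hp),
      Finset.sum_add_distrib, ← Finset.mul_sum, ← Finset.mul_sum, hsumE1, hsumE2]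

  -- ## assembling the second moment of S
  have hOOint : Integrable (fun ω => Of ω * Of ω) P := by
    have hptw : (fun ω => ∑ p ∈ (Finset.univ : Finset (Fin k × Fin (2 ^ b))).offDiag,
        ∑ q ∈ (Finset.univ : Finset (Fin k × Fin (2 ^ b))).offDiag, T p ω * T q ω)
        =ᵐ[P] fun ω => Of ω * Of ω := by
      refine ae_of_all P fun ω => ?_
      rw [hOdef]
      dsimp only
      rw [Finset.sum_mul_sum]
    exact (integrable_finset_sum _ fun p _ =>
      integrable_finset_sum _ fun q _ => hTTint p q).congr hptw
  have hCOint : Integrable (fun ω => Cf ω * Of ω) P := by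
    have hptw : (fun ω => ∑ p ∈ (Finset.univ : Finset (Fin k × Fin (2 ^ b))).offDiag,
        Cf ω * T p ω) =ᵐ[P] fun ω => Cf ω * Of ω := by
      refine ae_of_all P fun ω => ?_
      rw [hOdef]
      dsimp only
      rw [Finset.mul_sum]
    exact (integrable_finset_sum _ fun p _ => hCTint p).congr hptw
  have hES2 : ∫ ω, Sf ω ^ 2 ∂P = (∫ ω, Cf ω ^ 2 ∂P) + 2 * (∫ ω, Cf ω * Of ω ∂P)
      + ∫ ω, Of ω * Of ω ∂P := by
    have hcong : (fun ω => Sf ω ^ 2)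
        =ᵐ[P] fun ω => Cf ω ^ 2 + (2 * (Cf ω * Of ω) + Of ω * Of ω) := by
      filter_upwards [hSae] with ω hω
      have hω' : Sf ω = Cf ω + Of ω := hω
      rw [hω']
      ring
    have hi1 : Integrable (fun ω => 2 * (Cf ω * Of ω) + Of ω * Of ω) P :=
      (hCOint.const_mul 2).add hOOint
    rw [integral_congr_ae hcong, integral_add hC2int hi1,
      integral_add (hCOint.const_mul 2) hOOint, integral_const_mul]
    ring
  -- ## measurability and boundedness of S
  have hmS : Measurable Sf := by
    have hrw : Sf = fun ω => ∑ i : Fin k × Fin (2 ^ b), ∑ i' : Fin k × Fin (2 ^ b),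
        T (i, i') ω := funext hS1
    rw [hrw]
    exact Finset.measurable_sum _ fun i _ => Finset.measurable_sum _ fun i' _ => hmT _
  have hSbd : ∀ᵐ ω ∂P, |Sf ω|
      ≤ (k:ℝ) + ((Finset.univ : Finset (Fin k × Fin (2 ^ b))).offDiag.card : ℝ) := by
    filter_upwards [hSae, hallr] with ω hω hr'
    have hω' : Sf ω = Cf ω + Of ω := hω
    have hOb : |Of ω| ≤ ((Finset.univ : Finset (Fin k × Fin (2 ^ b))).offDiag.card : ℝ) := by
      rw [hOdef]
      dsimp only
      calc |∑ p ∈ (Finset.univ : Finset (Fin k × Fin (2 ^ b))).offDiag, T p ω|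
          ≤ ∑ p ∈ (Finset.univ : Finset (Fin k × Fin (2 ^ b))).offDiag, |T p ω| :=
            Finset.abs_sum_le_sum_abs _ _
      _ ≤ ∑ _p ∈ (Finset.univ : Finset (Fin k × Fin (2 ^ b))).offDiag, (1:ℝ) :=
            Finset.sum_le_sum fun p _ => hTptw ω hr' p
      _ = ((Finset.univ : Finset (Fin k × Fin (2 ^ b))).offDiag.card : ℝ) := by simp
    calc |Sf ω| = |Cf ω + Of ω| := by rw [hω']
    _ ≤ |Cf ω| + |Of ω| := abs_add_le _ _
    _ ≤ (k:ℝ) + ((Finset.univ : Finset (Fin k × Fin (2 ^ b))).offDiag.card : ℝ) :=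
          add_le_add (hCbd ω) hOb
  have hk1 : (1:ℝ) ≤ (k:ℝ) := by exact_mod_cast hk
  have hkR : (k:ℝ) ≠ 0 := by positivity
  have hBR : (B:ℝ) ≠ 0 := by
    have : (1:ℝ) ≤ (B:ℝ) := by exact_mod_cast hB
    positivity
  have hexp : MemLp (fun ω => Sf ω / (k:ℝ)) 2 P := by
    refine MemLp.mono_exponent (memLp_top_of_bound
      ((hmS.div_const _).aestronglyMeasurable)
      ((k:ℝ) + ((Finset.univ : Finset (Fin k × Fin (2 ^ b))).offDiag.card : ℝ)) ?_) le_top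
    filter_upwards [hSbd] with ω hω
    rw [Real.norm_eq_abs, abs_div]
    calc |Sf ω| / |(k:ℝ)| ≤ |Sf ω| := div_le_self (abs_nonneg _) (by
          rw [abs_of_nonneg (by positivity : (0:ℝ) ≤ (k:ℝ))]; exact hk1)
    _ ≤ _ := hω
  have hmean : ∫ ω, Sf ω / (k:ℝ) ∂P = Pb := by
    rw [integral_div, hES]
    field_simp
  constructor
  · exact hmean
  · show variance (fun ω => Sf ω / (k:ℝ)) P = _
    rw [variance_eq_sub hexp]
    have h1 : P[(fun ω => Sf ω / (k:ℝ)) ^ 2] = (∫ ω, Sf ω ^ 2 ∂P) / (k:ℝ) ^ 2 := by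
      have hfn : (fun ω => Sf ω / (k:ℝ)) ^ 2 = fun ω => Sf ω ^ 2 / (k:ℝ) ^ 2 := by
        funext ω
        simp [pow_two]
        ring
      rw [hfn, integral_div]
    have h2 : P[fun ω => Sf ω / (k:ℝ)] = Pb := hmean
    rw [h1, h2, hES2, hECO, hEO2, hEC2]
    field_simp
    ring
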